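/- Let B be a complete Boolean algebra. Suppose there exist p ∈ B⁺ and a sequence ⟨bₙ : n∈ω⟩ in B with bₙ ≤ p for all n, such that for every infinite set A ⊆ ω both p ≤ ⨅_{k∈ω} ⨆_{n∈A, n≥k} bₙ and p ≤ ⨅_{k∈ω} ⨆_{n∈A, n≥k} (p ∖ bₙ) hold (this is the Boolean-valued statement that forcing by B produces an independent (splitting) real below p, namely a set τ ⊆ ω with bₙ = ‖n ∈ τ‖ ⊓ p such that p forces that τ splits every infinite ground-model subset of ω). Then White has a winning strategy in the game G₃ played on B. -/

import Mathlib

/-- For `p ∈ B⁺` and a move `q ≤ p`, Black's choice: `q⁰ = q`, `q¹ = p \ q`. -/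
def pickMove {B : Type*} [CompleteBooleanAlgebra B] (p q : B) (i : Bool) : B :=
  if i then p \ q else q

section Games

variable {B : Type*} [CompleteBooleanAlgebra B]

/-- White wins a play of `G₁` iff `⨅ₙ pₙ^{iₙ} = 0`. -/
def WinG1 (p : B) (pn : ℕ → B) (i : ℕ → Bool) : Prop :=
  (⨅ n, pickMove p (pn n) (i n)) = ⊥

/-- White wins a play of `G₂` iff `⨆ₖ ⨅_{n ≥ k} pₙ^{iₙ} = 0`. -/
def WinG2 (p : B) (pn : ℕ → B) (i : ℕ → Bool) : Prop :=
  (⨆ k, ⨅ n, ⨅ _ : k ≤ n, pickMove p (pn n) (i n)) = ⊥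

/-- White wins a play of `G₃` iff `⨆_{A ⊆ ω infinite} ⨅_{n ∈ A} pₙ^{iₙ} = 0`. -/
def WinG3 (p : B) (pn : ℕ → B) (i : ℕ → Bool) : Prop :=
  (⨆ A ∈ {A : Set ℕ | A.Infinite}, ⨅ n ∈ A, pickMove p (pn n) (i n)) = ⊥

/-- White wins a play of `G₄` iff `⨅ₖ ⨆_{n ≥ k} pₙ^{iₙ} = 0`. -/
def WinG4 (p : B) (pn : ℕ → B) (i : ℕ → Bool) : Prop :=
  (⨅ k, ⨆ n, ⨆ _ : k ≤ n, pickMove p (pn n) (i n)) = ⊥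

/-- White's moves when following strategy `σ` against Black's play `i`:
the `n`-th move depends on Black's first `n` moves. -/
def whitePlays (σ : List Bool → B) (i : ℕ → Bool) (n : ℕ) : B :=
  σ (List.ofFn fun k : Fin n => i k)

/-- Black's moves when following strategy `τ` against White's play `p, p₀, p₁, …`:
the `n`-th move depends on `p` and on `p₀, …, pₙ`. -/
def blackPlays (τ : B → List B → Bool) (p : B) (pn : ℕ → B) (n : ℕ) : Bool :=
  τ p (List.ofFn fun k : Fin (n + 1) => pn k)

/-- White has a winning strategy in the game with winning condition `Win`:
an initial move `p ∈ B⁺` and a rule `σ` giving legal moves in `(0,p)`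
such that White wins every play in which he follows it. -/
def WhiteWS (Win : B → (ℕ → B) → (ℕ → Bool) → Prop) : Prop :=
  ∃ p : B, p ≠ ⊥ ∧ ∃ σ : List Bool → B,
    (∀ s : List Bool, σ s ∈ Set.Ioo ⊥ p) ∧
    ∀ i : ℕ → Bool, Win p (whitePlays σ i) i

/-- Black has a winning strategy in the game with winning condition `Win`:
a rule `τ` such that for every legal play of White, Black following `τ` wins
(i.e. White does not win). -/
def BlackWS (Win : B → (ℕ → B) → (ℕ → Bool) → Prop) : Prop :=
  ∃ τ : B → List B → Bool,
    ∀ p : B, p ≠ ⊥ → ∀ pn : ℕ → B, (∀ n, pn n ∈ Set.Ioo ⊥ p) →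
      ¬ Win p pn (blackPlays τ p pn)

/-- `aⁱ` for `i ∈ {0,1}`: `a⁰ = a`, `a¹ = aᶜ`. -/
def compPow (a : B) (i : Bool) : B :=
  if i then aᶜ else a

end Games

/-- A complete Boolean algebra is `(ω,2)`-distributive iff
`⨆_{f : ω → 2} ⨅ₙ aₙ^{f(n)} = 1` for every sequence `⟨aₙ⟩`. -/
def OmegaTwoDistributive (B : Type*) [CompleteBooleanAlgebra B] : Prop :=
  ∀ a : ℕ → B, (⨆ f : ℕ → Bool, ⨅ n, compPow (a n) (f n)) = ⊤

/-- `w : 2^{<ω} → B` satisfies (∗) below `p`: for every `i : ω → 2`,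
`⨆_{A ⊆ ω infinite} ⨅_{n ∈ A} w_{i↾n}^{i(n)} = 0`. -/
def SatisfiesStar {B : Type*} [CompleteBooleanAlgebra B] (p : B) (w : List Bool → B) : Prop :=
  ∀ i : ℕ → Bool,
    (⨆ A ∈ {A : Set ℕ | A.Infinite}, ⨅ n ∈ A,
      pickMove p (w (List.ofFn fun k : Fin n => i k)) (i n)) = ⊥

/-- If `c` is below a supremum of terms each of which is disjoint from `c`, then `c = ⊥`. -/
lemma aux_disjoint_sup {B : Type*} [CompleteBooleanAlgebra B] {c : B} {ι : Type*}
    {A : Set ι} {d : ι → B} (h1 : c ≤ ⨆ m ∈ A, d m) (h2 : ∀ m ∈ A, c ⊓ d m = ⊥) :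
    c = ⊥ := by
  have hc : c = c ⊓ ⨆ m ∈ A, d m := (inf_eq_left.mpr h1).symm
  apply le_bot_iff.mp
  rw [hc]
  simp only [inf_iSup_eq]
  exact iSup₂_le fun m hm => (h2 m hm).le

/-- If forcing by `B` produces an independent (splitting) real below some `p ∈ B⁺`
(expressed Boolean-valued: `⟨bₙ⟩` with `bₙ ≤ p` such that for every infinite `A ⊆ ω`,
`p ≤ ⨅ₖ ⨆_{n ∈ A, n ≥ k} bₙ` and `p ≤ ⨅ₖ ⨆_{n ∈ A, n ≥ k} (p ∖ bₙ)`),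
then White has a winning strategy in the game `G₃` on `B`. -/
theorem stmt_7 {B : Type*} [CompleteBooleanAlgebra B] (p : B) (hp : p ≠ ⊥)
    (b : ℕ → B) (hb : ∀ n, b n ≤ p)
    (hsplit : ∀ A : Set ℕ, A.Infinite →
      p ≤ (⨅ k, ⨆ n ∈ A, ⨆ _ : k ≤ n, b n) ∧
      p ≤ (⨅ k, ⨆ n ∈ A, ⨆ _ : k ≤ n, p \ b n)) :
    WhiteWS (WinG3 (B := B)) := by
  classical
  -- the sets of trivial values are finite
  have h0 : {n : ℕ | b n = ⊥}.Finite := by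
    by_contra h
    have hA := ((hsplit _ h).1).trans (iInf_le _ 0)
    have : p ≤ ⊥ := hA.trans (iSup₂_le fun n hn => iSup_le fun _ => hn.le)
    exact hp (le_bot_iff.mp this)
  have h1 : {n : ℕ | b n = p}.Finite := by
    by_contra h
    have hA := ((hsplit _ h).2).trans (iInf_le _ 0)
    have : p ≤ ⊥ := hA.trans (iSup₂_le fun n hn => iSup_le fun _ => by
      simp only [Set.mem_setOf_eq] at hn; rw [hn, sdiff_self])
    exact hp (le_bot_iff.mp this)
  obtain ⟨N, hN⟩ := (h0.union h1).bddAbove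
  set M : ℕ := N + 1 with hM
  have hgood : ∀ n : ℕ, b (n + M) ≠ ⊥ ∧ b (n + M) ≠ p := by
    intro n
    constructor <;> intro hbad
    · have := hN (Set.mem_union_left _ hbad); omega
    · have := hN (Set.mem_union_right _ hbad); omega
  refine ⟨p, hp, fun s => b (s.length + M), fun s =>
    ⟨bot_lt_iff_ne_bot.mpr (hgood s.length).1,
     lt_of_le_of_ne (hb _) (hgood s.length).2⟩, ?_⟩
  intro i
  have hwp : ∀ n, whitePlays (fun s => b (s.length + M)) i n = b (n + M) := by
    intro n; simp [whitePlays]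
  unfold WinG3
  apply le_bot_iff.mp
  apply iSup₂_le
  intro A hA
  simp only [Set.mem_setOf_eq] at hA
  set c : B := ⨅ n ∈ A, pickMove p (whitePlays (fun s => b (s.length + M)) i n) (i n) with hc
  have hcle : ∀ n ∈ A, c ≤ pickMove p (b (n + M)) (i n) := by
    intro n hn
    have := iInf₂_le (f := fun n (_ : n ∈ A) =>
      pickMove p (whitePlays (fun s => b (s.length + M)) i n) (i n)) n hn
    rwa [hwp n] at this
  have hcp : c ≤ p := by
    obtain ⟨n₀, hn₀⟩ := hA.nonempty
    refine (hcle n₀ hn₀).trans ?_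
    cases i n₀ <;> simp [pickMove, hb, sdiff_le]
  -- one of the two parts of A is infinite
  have hsplitA : ({n ∈ A | i n = false}).Infinite ∨ ({n ∈ A | i n = true}).Infinite := by
    by_contra h
    push_neg at h
    refine hA ((h.1.union h.2).subset fun n hn => ?_)
    cases hi : i n
    · exact Set.mem_union_left _ ⟨hn, hi⟩
    · exact Set.mem_union_right _ ⟨hn, hi⟩
  show c ≤ ⊥
  rcases hsplitA with hinf | hinf
  · -- on infinitely many n, Black played 0, so c ≤ b (n+M); use the complement part
    set A' : Set ℕ := (fun n => n + M) '' {n ∈ A | i n = false} with hA'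
    have hA'inf : A'.Infinite := hinf.image (fun x _ y _ h => by omega)
    have hsup : p ≤ ⨆ m ∈ A', p \ b m := by
      refine (((hsplit A' hA'inf).2).trans (iInf_le _ 0)).trans ?_
      exact iSup₂_le fun n hn => iSup_le fun _ =>
        le_iSup₂ (f := fun n (_ : n ∈ A') => p \ b n) n hn
    have := aux_disjoint_sup (c := c) (hcp.trans hsup) ?_
    · exact this.le
    · rintro m ⟨n, ⟨hnA, hni⟩, rfl⟩
      have hcb : c ≤ b (n + M) := by
        have := hcle n hnA; rwa [hni, pickMove] at this
      exact le_bot_iff.mp <|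
        (inf_le_inf_right _ hcb).trans (by simp)
  · set A' : Set ℕ := (fun n => n + M) '' {n ∈ A | i n = true} with hA'
    have hA'inf : A'.Infinite := hinf.image (fun x _ y _ h => by omega)
    have hsup : p ≤ ⨆ m ∈ A', b m := by
      refine (((hsplit A' hA'inf).1).trans (iInf_le _ 0)).trans ?_
      exact iSup₂_le fun n hn => iSup_le fun _ =>
        le_iSup₂ (f := fun n (_ : n ∈ A') => b n) n hn
    have := aux_disjoint_sup (c := c) (hcp.trans hsup) ?_
    · exact this.le
    · rintro m ⟨n, ⟨hnA, hni⟩, rfl⟩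
      have hcb : c ≤ p \ b (n + M) := by
        have := hcle n hnA; rwa [hni, pickMove] at this
      exact le_bot_iff.mp <|
        (inf_le_inf_right _ hcb).trans (by simp)
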